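/- A quaternion β = b₀ + b₁i + b₂j + b₃k in the Lipschitz order R lies in the right ideal R(1 − i − j − k) (i.e., β = α(1 − i − j − k) for some α ∈ R) if and only if for every index μ ∈ {0,1,2,3}, the sum of the three coefficients bᵥ with ν ≠ μ is congruent to bᵤ modulo 4. -/

import Mathlib

open Quaternion

def oneMinusIJK : ℍ[ℤ] := ⟨1, -1, -1, -1⟩

theorem stmt_4 (b₀ b₁ b₂ b₃ : ℤ) :
    (∃ α : ℍ[ℤ], (⟨b₀, b₁, b₂, b₃⟩ : ℍ[ℤ]) = α * oneMinusIJK) ↔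
    (b₁ + b₂ + b₃ ≡ b₀ [ZMOD 4] ∧ b₀ + b₂ + b₃ ≡ b₁ [ZMOD 4] ∧
     b₀ + b₁ + b₃ ≡ b₂ [ZMOD 4] ∧ b₀ + b₁ + b₂ ≡ b₃ [ZMOD 4]) := by
  constructor
  · rintro ⟨α, h⟩
    replace h := Quaternion.ext_iff.mp h
    simp only [Quaternion.re_mul, Quaternion.imI_mul, Quaternion.imJ_mul,
      Quaternion.imK_mul] at h
    simp only [oneMinusIJK] at h
    obtain ⟨h0, h1, h2, h3⟩ := h
    refine ⟨?_, ?_, ?_, ?_⟩ <;> simp only [Int.ModEq] <;> omega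
  · rintro ⟨h0, h1, h2, h3⟩
    simp only [Int.ModEq] at h0 h1 h2 h3
    obtain ⟨α, hα⟩ : ∃ α : ℍ[ℤ], α = ⟨(b₀ - b₁ - b₂ - b₃) / 4, (b₀ + b₁ + b₂ - b₃) / 4,
      (b₀ - b₁ + b₂ + b₃) / 4, (b₀ + b₁ - b₂ + b₃) / 4⟩ := ⟨_, rfl⟩
    refine ⟨α, ?_⟩
    refine Quaternion.ext_iff.mpr ?_
    simp only [Quaternion.re_mul, Quaternion.imI_mul, Quaternion.imJ_mul,
      Quaternion.imK_mul]
    simp only [oneMinusIJK, hα]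
    refine ⟨?_, ?_, ?_, ?_⟩ <;> omega
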